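/- Let A and B be real 3×3 matrices, let u, v ∈ ℝ³ be linearly independent, let ν = (u × v)/‖u × v‖, and let P = I₃ − ν νᵀ be the orthogonal projection onto the plane spanned by u and v. Define w(s,t) = ((I + sA + tB)u) × ((I + sA + tB)v) and N(s,t) = w(s,t)/‖w(s,t)‖ for (s,t) in a neighborhood of (0,0). Then the mixed second partial derivative ∂²N/∂s∂t at (0,0) exists and equals P Bᵀ P Aᵀ ν + P Aᵀ P Bᵀ ν − ⟨P Aᵀ ν, P Bᵀ ν⟩ ν. -/

import Mathlib

open Matrix

private lemma hasDerivAt_dotP {f g : ℝ → Fin 3 → ℝ} {f' g' : Fin 3 → ℝ} {x : ℝ}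
    (hf : HasDerivAt f f' x) (hg : HasDerivAt g g' x) :
    HasDerivAt (fun t => f t ⬝ᵥ g t) (f' ⬝ᵥ g x + f x ⬝ᵥ g') x := by
  have h : ∀ i ∈ Finset.univ, HasDerivAt (fun t => f t i * g t i)
      (f' i * g x i + f x i * g' i) x :=
    fun i _ => (hasDerivAt_pi.1 hf i).mul (hasDerivAt_pi.1 hg i)
  simpa [dotProduct, Finset.sum_add_distrib] using HasDerivAt.fun_sum h

private lemma cross_lin (A : Matrix (Fin 3) (Fin 3) ℝ) (u v : Fin 3 → ℝ) :
    crossProduct (A *ᵥ u) v + crossProduct u (A *ᵥ v)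
      = A.trace • crossProduct u v - Aᵀ *ᵥ crossProduct u v := by
  funext i
  fin_cases i <;>
  · simp [cross_apply, Matrix.mulVec, dotProduct, Fin.sum_univ_three, Matrix.trace,
      Matrix.diag, Matrix.transpose_apply]
    ring

private lemma cross_bilin (A B : Matrix (Fin 3) (Fin 3) ℝ) (u v : Fin 3 → ℝ) :
    crossProduct (A *ᵥ u) (B *ᵥ v) + crossProduct (B *ᵥ u) (A *ᵥ v)
      = Bᵀ *ᵥ (Aᵀ *ᵥ crossProduct u v) + Aᵀ *ᵥ (Bᵀ *ᵥ crossProduct u v)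
        - A.trace • (Bᵀ *ᵥ crossProduct u v) - B.trace • (Aᵀ *ᵥ crossProduct u v)
        + (A.trace * B.trace - (A * B).trace) • crossProduct u v := by
  funext i
  fin_cases i <;>
  · simp [cross_apply, Matrix.mulVec, dotProduct, Fin.sum_univ_three, Matrix.trace,
      Matrix.diag, Matrix.transpose_apply, Matrix.mul_apply]
    ring

private lemma proj_apply (ν x : Fin 3 → ℝ) :
    (1 - vecMulVec ν ν) *ᵥ x = x - (ν ⬝ᵥ x) • ν := by
  funext i
  fin_cases i <;>
  · simp [Matrix.sub_mulVec, Matrix.one_mulVec, Matrix.mulVec, Matrix.vecMulVec_apply,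
      dotProduct, Fin.sum_univ_three]
    ring

set_option maxHeartbeats 2000000 in
theorem stmt7 (A B : Matrix (Fin 3) (Fin 3) ℝ) (u v : Fin 3 → ℝ)
    (huv : LinearIndependent ℝ ![u, v])
    (ν : Fin 3 → ℝ)
    (hν : ν = (Real.sqrt (crossProduct u v ⬝ᵥ crossProduct u v))⁻¹ • crossProduct u v)
    (P : Matrix (Fin 3) (Fin 3) ℝ) (hP : P = 1 - vecMulVec ν ν)
    (w : ℝ → ℝ → Fin 3 → ℝ)
    (hw : ∀ s t : ℝ, w s t =
      crossProduct ((1 + s • A + t • B).mulVec u) ((1 + s • A + t • B).mulVec v))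
    (N : ℝ → ℝ → Fin 3 → ℝ)
    (hN : ∀ s t : ℝ, N s t = (Real.sqrt (w s t ⬝ᵥ w s t))⁻¹ • w s t) :
    HasDerivAt (fun s : ℝ => deriv (fun t : ℝ => N s t) 0)
      ((P * Bᵀ * P * Aᵀ).mulVec ν + (P * Aᵀ * P * Bᵀ).mulVec ν
        - ((P * Aᵀ).mulVec ν ⬝ᵥ (P * Bᵀ).mulVec ν) • ν) 0 := by
  have hcne : crossProduct u v ≠ 0 := crossProduct_ne_zero_iff_linearIndependent.2 huv
  set c : Fin 3 → ℝ := crossProduct u v with hcdef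
  have hq0 : 0 < c ⬝ᵥ c :=
    lt_of_le_of_ne (Finset.sum_nonneg fun i _ => mul_self_nonneg _)
      (fun h => hcne (dotProduct_self_eq_zero.1 h.symm))
  set r : ℝ := Real.sqrt (c ⬝ᵥ c) with hrdef
  have hrpos : 0 < r := Real.sqrt_pos.2 hq0
  have hr2 : r * r = c ⬝ᵥ c := Real.mul_self_sqrt hq0.le
  set α₁ : Fin 3 → ℝ := crossProduct (A *ᵥ u) v + crossProduct u (A *ᵥ v) with hα₁
  set α₂ : Fin 3 → ℝ := crossProduct (A *ᵥ u) (A *ᵥ v) with hα₂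
  set β₀ : Fin 3 → ℝ := crossProduct (B *ᵥ u) v + crossProduct u (B *ᵥ v) with hβ₀
  set β₁ : Fin 3 → ℝ := crossProduct (A *ᵥ u) (B *ᵥ v) + crossProduct (B *ᵥ u) (A *ᵥ v) with hβ₁
  set β₂ : Fin 3 → ℝ := crossProduct (B *ᵥ u) (B *ᵥ v) with hβ₂
  set c0 : ℝ → Fin 3 → ℝ := fun s => c + s • α₁ + (s * s) • α₂ with hc0
  set c1 : ℝ → Fin 3 → ℝ := fun s => β₀ + s • β₁ with hc1
  have hwexp : ∀ s t : ℝ, w s t = c0 s + t • c1 s + (t * t) • β₂ := by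
    intro s t
    rw [hw]
    funext i
    fin_cases i <;>
    · simp [hc0, hc1, hα₁, hα₂, hβ₀, hβ₁, hβ₂, hcdef, cross_apply, Matrix.mulVec,
        dotProduct, Fin.sum_univ_three, Matrix.one_apply, Matrix.add_apply, Matrix.smul_apply]
      ring
  have hw0 : ∀ s : ℝ, w s 0 = c0 s := by
    intro s; rw [hwexp]; simp
  have hwt : ∀ s : ℝ, HasDerivAt (fun t => w s t) (c1 s) 0 := by
    intro s
    have h1 : HasDerivAt (fun t : ℝ => t • c1 s) (c1 s) 0 := by
      simpa using (hasDerivAt_id (0:ℝ)).smul_const (c1 s)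
    have h2 : HasDerivAt (fun t : ℝ => (t * t) • β₂) (0 : Fin 3 → ℝ) 0 := by
      simpa using ((hasDerivAt_id (0:ℝ)).mul (hasDerivAt_id (0:ℝ))).smul_const β₂
    have h3 := ((hasDerivAt_const (0:ℝ) (c0 s)).fun_add h1).fun_add h2
    simp only [hwexp]
    convert! h3 using 1
    simp
  have hqt : ∀ s : ℝ, HasDerivAt (fun t => w s t ⬝ᵥ w s t) (c1 s ⬝ᵥ c0 s + c0 s ⬝ᵥ c1 s) 0 := by
    intro s
    simpa only [hw0] using hasDerivAt_dotP (hwt s) (hwt s)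
  have hND : ∀ s : ℝ, 0 < c0 s ⬝ᵥ c0 s → HasDerivAt (fun t => N s t)
      ((Real.sqrt (c0 s ⬝ᵥ c0 s))⁻¹ • c1 s
        - ((c0 s ⬝ᵥ c1 s) * ((Real.sqrt (c0 s ⬝ᵥ c0 s))⁻¹ * (c0 s ⬝ᵥ c0 s)⁻¹)) • c0 s) 0 := by
    intro s hQs
    have hsqpos : 0 < Real.sqrt (c0 s ⬝ᵥ c0 s) := Real.sqrt_pos.2 hQs
    have hsq : HasDerivAt (fun t => Real.sqrt (w s t ⬝ᵥ w s t))
        (1 / (2 * Real.sqrt (c0 s ⬝ᵥ c0 s)) * (c1 s ⬝ᵥ c0 s + c0 s ⬝ᵥ c1 s)) 0 := by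
      have hg : HasDerivAt Real.sqrt (1 / (2 * Real.sqrt (c0 s ⬝ᵥ c0 s))) (w s 0 ⬝ᵥ w s 0) := by
        rw [hw0]; exact Real.hasDerivAt_sqrt hQs.ne'
      exact hg.comp 0 (hqt s)
    have hne : Real.sqrt (w s 0 ⬝ᵥ w s 0) ≠ 0 := by rw [hw0]; exact hsqpos.ne'
    have hinv := hsq.fun_inv hne
    have hmain := hinv.fun_smul (hwt s)
    simp only [hN]
    convert! hmain using 1
    rw [hw0]
    have h1 : c1 s ⬝ᵥ c0 s = c0 s ⬝ᵥ c1 s := dotProduct_comm _ _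
    rw [h1, Real.sq_sqrt hQs.le]
    module
  -- derivatives in s at 0
  have hc00 : c0 0 = c := by rw [hc0]; simp
  have hc10 : c1 0 = β₀ := by rw [hc1]; simp
  have hc0d : HasDerivAt c0 α₁ 0 := by
    have h1 : HasDerivAt (fun s : ℝ => s • α₁) α₁ 0 := by
      simpa using (hasDerivAt_id (0:ℝ)).smul_const α₁
    have h2 : HasDerivAt (fun s : ℝ => (s * s) • α₂) (0 : Fin 3 → ℝ) 0 := by
      simpa using ((hasDerivAt_id (0:ℝ)).mul (hasDerivAt_id (0:ℝ))).smul_const α₂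
    have h3 := ((hasDerivAt_const (0:ℝ) c).fun_add h1).fun_add h2
    rw [hc0]
    convert! h3 using 1
    simp
  have hc1d : HasDerivAt c1 β₁ 0 := by
    have h1 : HasDerivAt (fun s : ℝ => s • β₁) β₁ 0 := by
      simpa using (hasDerivAt_id (0:ℝ)).smul_const β₁
    have h3 := (hasDerivAt_const (0:ℝ) β₀).fun_add h1
    rw [hc1]
    convert! h3 using 1
    simp
  have hQd : HasDerivAt (fun s => c0 s ⬝ᵥ c0 s) (α₁ ⬝ᵥ c + c ⬝ᵥ α₁) 0 := by
    simpa only [hc00] using hasDerivAt_dotP hc0d hc0d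
  have hev : ∀ᶠ s in nhds (0:ℝ), 0 < c0 s ⬝ᵥ c0 s := by
    have h0 : (0:ℝ) < c0 0 ⬝ᵥ c0 0 := by rw [hc00]; exact hq0
    exact hQd.continuousAt.eventually (eventually_gt_nhds h0)
  have heq : (fun s : ℝ => deriv (fun t : ℝ => N s t) 0) =ᶠ[nhds 0]
      (fun s => (Real.sqrt (c0 s ⬝ᵥ c0 s))⁻¹ • c1 s
        - ((c0 s ⬝ᵥ c1 s) * ((Real.sqrt (c0 s ⬝ᵥ c0 s))⁻¹ * (c0 s ⬝ᵥ c0 s)⁻¹)) • c0 s) :=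
    hev.mono fun s hs => (hND s hs).deriv
  -- derivative of the explicit formula
  have hsqQd : HasDerivAt (fun s => Real.sqrt (c0 s ⬝ᵥ c0 s))
      (1 / (2 * r) * (α₁ ⬝ᵥ c + c ⬝ᵥ α₁)) 0 := by
    have hg : HasDerivAt Real.sqrt (1 / (2 * r)) (c0 0 ⬝ᵥ c0 0) := by
      rw [hc00, hrdef]; exact Real.hasDerivAt_sqrt hq0.ne'
    exact hg.comp 0 hQd
  have hfd : HasDerivAt (fun s => (Real.sqrt (c0 s ⬝ᵥ c0 s))⁻¹)
      (-(1 / (2 * r) * (α₁ ⬝ᵥ c + c ⬝ᵥ α₁)) / r ^ 2) 0 := by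
    have hne : Real.sqrt (c0 0 ⬝ᵥ c0 0) ≠ 0 := by rw [hc00]; exact hrpos.ne'
    have := hsqQd.fun_inv hne
    simpa only [hc00, ← hrdef] using this
  have hQinvd : HasDerivAt (fun s => (c0 s ⬝ᵥ c0 s)⁻¹)
      (-(α₁ ⬝ᵥ c + c ⬝ᵥ α₁) / (c ⬝ᵥ c) ^ 2) 0 := by
    have hne : c0 0 ⬝ᵥ c0 0 ≠ 0 := by rw [hc00]; exact hq0.ne'
    have := hQd.fun_inv hne
    simpa only [hc00] using this
  have hg1d : HasDerivAt (fun s => c0 s ⬝ᵥ c1 s) (α₁ ⬝ᵥ β₀ + c ⬝ᵥ β₁) 0 := by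
    simpa only [hc00, hc10] using hasDerivAt_dotP hc0d hc1d
  have hterm1 := hfd.fun_smul hc1d
  have hterm2 := (hg1d.fun_mul (hfd.fun_mul hQinvd)).fun_smul hc0d
  refine HasDerivAt.congr_of_eventuallyEq ?_ heq
  convert hterm1.fun_sub hterm2 using 1
  simp only [hc00, hc10, ← hrdef]
  subst hP
  subst hν
  have hiA : α₁ = A.trace • c - Aᵀ *ᵥ c := by
    rw [hα₁, hcdef]; exact cross_lin A u v
  have hiB : β₀ = B.trace • c - Bᵀ *ᵥ c := by
    rw [hβ₀, hcdef]; exact cross_lin B u v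
  have hiAB : β₁ = Bᵀ *ᵥ (Aᵀ *ᵥ c) + Aᵀ *ᵥ (Bᵀ *ᵥ c) - A.trace • (Bᵀ *ᵥ c)
      - B.trace • (Aᵀ *ᵥ c) + (A.trace * B.trace - (A * B).trace) • c := by
    rw [hβ₁, hcdef]; exact cross_bilin A B u v
  rw [hiA, hiB, hiAB]
  simp only [← mulVec_mulVec, proj_apply, Matrix.mulVec_smul, Matrix.mulVec_sub,
    Matrix.mulVec_add]
  simp only [add_dotProduct, dotProduct_add, sub_dotProduct, dotProduct_sub,
    smul_dotProduct, dotProduct_smul, smul_eq_mul]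
  simp only [dotProduct_comm (Aᵀ *ᵥ c) c, dotProduct_comm (Bᵀ *ᵥ c) c,
    dotProduct_comm (Bᵀ *ᵥ c) (Aᵀ *ᵥ c), dotProduct_comm (Bᵀ *ᵥ (Aᵀ *ᵥ c)) c,
    dotProduct_comm (Aᵀ *ᵥ (Bᵀ *ᵥ c)) c]
  rw [← hr2]
  have hrne : r ≠ 0 := hrpos.ne'
  match_scalars <;> field_simp <;> ring
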